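/- For all natural numbers a, b, c ≥ 0, the following identity holds in M₂(R): 2^{a+b+c}·[x,y]·tᵃuᵇvᶜ = [x,y]·(ad x)^{2a}·(ad y)^{2b}·(ad x ad y)ᶜ. -/

import Mathlib

open Matrix MvPolynomial

noncomputable section

variable (K : Type*) [Field K] [CharZero K]

/-- The first generic traceless 2×2 matrix `x = !![x₁₁, x₁₂; x₂₁, -x₁₁]` over
`R = K[x₁₁,x₁₂,x₂₁,y₁₁,y₁₂,y₂₁]`, realized as `MvPolynomial (Fin 6) K` with
`x₁₁ = X 0, x₁₂ = X 1, x₂₁ = X 2, y₁₁ = X 3, y₁₂ = X 4, y₂₁ = X 5`. -/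
def x : Matrix (Fin 2) (Fin 2) (MvPolynomial (Fin 6) K) := !![X 0, X 1; X 2, -(X 0)]

/-- The second generic traceless 2×2 matrix `y = !![y₁₁, y₁₂; y₂₁, -y₁₁]`. -/
def y : Matrix (Fin 2) (Fin 2) (MvPolynomial (Fin 6) K) := !![X 3, X 4; X 5, -(X 3)]

/-- `t = tr(x²)`. -/
def t : MvPolynomial (Fin 6) K := (x K * x K).trace

/-- `u = tr(y²)`. -/
def u : MvPolynomial (Fin 6) K := (y K * y K).trace

/-- `v = tr(xy)`. -/
def v : MvPolynomial (Fin 6) K := (x K * y K).trace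

/-- The right adjoint action `z ↦ z(ad w) = [z,w]`. -/
def ad (w z : Matrix (Fin 2) (Fin 2) (MvPolynomial (Fin 6) K)) :
    Matrix (Fin 2) (Fin 2) (MvPolynomial (Fin 6) K) := ⁅z, w⁆

lemma bracket_fin_two {R : Type*} [CommRing R] (a b c d e f g h : R) :
    ⁅!![a, b; c, d], !![e, f; g, h]⁆ =
      !![a*e + b*g - (e*a + f*c), a*f + b*h - (e*b + f*d);
         c*e + d*g - (g*a + h*c), c*f + d*h - (g*b + h*d)] := by
  ext i j
  fin_cases i <;> fin_cases j <;>
    simp [Ring.lie_def, Matrix.mul_apply, Fin.sum_univ_two]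

omit [CharZero K] in
lemma ad_smul (w m : Matrix (Fin 2) (Fin 2) (MvPolynomial (Fin 6) K))
    (r : MvPolynomial (Fin 6) K) : ad K w (r • m) = r • ad K w m := by
  simp [ad, smul_lie, Ring.lie_def, smul_sub, smul_mul_assoc, mul_smul_comm]

set_option maxHeartbeats 1600000 in
omit [CharZero K] in
lemma hxx : ad K (x K) (ad K (x K) ⁅x K, y K⁆) = (2 * t K) • ⁅x K, y K⁆ := by
  show ⁅⁅⁅x K, y K⁆, x K⁆, x K⁆ = _
  rw [t, x, y, bracket_fin_two, bracket_fin_two, bracket_fin_two]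
  refine Matrix.ext fun i j => ?_
  fin_cases i <;> fin_cases j <;>
    simp [Matrix.trace_fin_two, Matrix.mul_apply, Fin.sum_univ_two] <;> ring

set_option maxHeartbeats 1600000 in
omit [CharZero K] in
lemma hyy : ad K (y K) (ad K (y K) ⁅x K, y K⁆) = (2 * u K) • ⁅x K, y K⁆ := by
  show ⁅⁅⁅x K, y K⁆, y K⁆, y K⁆ = _
  rw [u, x, y, bracket_fin_two, bracket_fin_two, bracket_fin_two]
  refine Matrix.ext fun i j => ?_
  fin_cases i <;> fin_cases j <;>
    simp [Matrix.trace_fin_two, Matrix.mul_apply, Fin.sum_univ_two] <;> ring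

set_option maxHeartbeats 1600000 in
omit [CharZero K] in
lemma hxy : ad K (y K) (ad K (x K) ⁅x K, y K⁆) = (2 * v K) • ⁅x K, y K⁆ := by
  show ⁅⁅⁅x K, y K⁆, x K⁆, y K⁆ = _
  rw [v, x, y, bracket_fin_two, bracket_fin_two, bracket_fin_two]
  refine Matrix.ext fun i j => ?_
  fin_cases i <;> fin_cases j <;>
    simp [Matrix.trace_fin_two, Matrix.mul_apply, Fin.sum_univ_two] <;> ring

omit [CharZero K] in
lemma iter_x (a : ℕ) :
    (ad K (x K))^[2 * a] ⁅x K, y K⁆ = ((2 * t K) ^ a) • ⁅x K, y K⁆ := by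
  induction a with
  | zero => simp
  | succ a ih =>
      have : 2 * (a + 1) = 2 + 2 * a := by ring
      rw [this, Function.iterate_add_apply, ih]
      simp only [Function.iterate_succ, Function.iterate_zero, Function.comp_apply, id_eq]
      rw [ad_smul, ad_smul, hxx, smul_smul]
      congr 1 <;> ring

omit [CharZero K] in
lemma iter_y (b : ℕ) (r : MvPolynomial (Fin 6) K) :
    (ad K (y K))^[2 * b] (r • ⁅x K, y K⁆) = (r * (2 * u K) ^ b) • ⁅x K, y K⁆ := by
  induction b with
  | zero => simp
  | succ b ih =>
      have : 2 * (b + 1) = 2 + 2 * b := by ring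
      rw [this, Function.iterate_add_apply, ih]
      simp only [Function.iterate_succ, Function.iterate_zero, Function.comp_apply, id_eq]
      rw [ad_smul, ad_smul, hyy, smul_smul]
      congr 1 <;> ring

omit [CharZero K] in
lemma iter_xy (c : ℕ) (r : MvPolynomial (Fin 6) K) :
    (ad K (y K) ∘ ad K (x K))^[c] (r • ⁅x K, y K⁆) =
      (r * (2 * v K) ^ c) • ⁅x K, y K⁆ := by
  induction c generalizing r with
  | zero => simp
  | succ c ih =>
      rw [Function.iterate_succ_apply]
      simp only [Function.comp_apply]
      rw [ad_smul, ad_smul, hxy, smul_smul, ih]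
      congr 1 <;> ring

/-- For `a, b, c ≥ 0`: `2^{a+b+c}[x,y]tᵃuᵇvᶜ = [x,y](ad x)^{2a}(ad y)^{2b}(ad x ad y)ᶜ`. -/
theorem stmt_9 (a b c : ℕ) :
    ((2 : MvPolynomial (Fin 6) K) ^ (a + b + c) * t K ^ a * u K ^ b * v K ^ c) •
        ⁅x K, y K⁆ =
      (ad K (y K) ∘ ad K (x K))^[c]
        ((ad K (y K))^[2 * b] ((ad K (x K))^[2 * a] ⁅x K, y K⁆)) := by
  rw [iter_x, iter_y, iter_xy]
  congr 1
  rw [mul_pow, mul_pow, mul_pow, pow_add, pow_add]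
  ring
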